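/- Let G: R^d → R be continuous with inf G > −∞, satisfying G(θ) − inf G ≤ C(1 + ‖θ‖₂²) for all θ. Let ρ, ρ̃ be probability densities in L^∞(R^d) ∩ P₂(R^d) with second moments bounded by K and such that ρ(Q[ρ]) ≥ c and ρ̃(Q[ρ̃]) ≥ c for measurable sets Q[ρ], Q[ρ̃] ⊆ B_R(0) determined by the quantile construction. Suppose additionally the auxiliary estimate ‖∫_{Q[ρ]} f ρ dθ − ∫_{Q[ρ̃]} f ρ̃ dθ‖₂ ≤ C̃(‖ρ − ρ̃‖_{L²(B_R(0))} + W₂(ρ, ρ̃)) holds for all bounded measurable f with sup_{B_R(0)}‖f‖₂ ≤ M (with C̃ depending on R, M, ‖ρ̃‖_{L^∞}). Then the consensus points m[ρ] := ∫_{Q[ρ]} θ e^{−αG(θ)} ρ dθ / ∫_{Q[ρ]} e^{−αG(θ)} ρ dθ satisfy ‖m[ρ] − m[ρ̃]‖₂ ≤ C(‖ρ − ρ̃‖_{L²(B_R(0))} + W₂(ρ, ρ̃)), with C depending only on R, K, c, α, and C̃. -/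

import Mathlib

open MeasureTheory Metric

noncomputable section

/-- The 2-Wasserstein distance between two measures on `ℝ^d`, defined as the infimum over
all couplings of the square root of the second moment of the displacement. -/
def W2 {d : ℕ} (μ ν : Measure (EuclideanSpace ℝ (Fin d))) : ℝ :=
  sInf {c : ℝ |
    ∃ π : Measure (EuclideanSpace ℝ (Fin d) × EuclideanSpace ℝ (Fin d)),
      π.map Prod.fst = μ ∧ π.map Prod.snd = ν ∧
      c = Real.sqrt (∫ p, ‖p.1 - p.2‖ ^ 2 ∂π)}

/-- The consensus point: Gibbs-weighted barycenter of the restriction of the density `ρ`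
to the set `Q`, with weight `exp(−αG)`. -/
def consensus {d : ℕ} (G : EuclideanSpace ℝ (Fin d) → ℝ) (α : ℝ)
    (ρ : EuclideanSpace ℝ (Fin d) → ℝ) (Q : Set (EuclideanSpace ℝ (Fin d))) :
    EuclideanSpace ℝ (Fin d) :=
  (∫ θ in Q, Real.exp (-α * G θ) * ρ θ)⁻¹ •
    ∫ θ in Q, (Real.exp (-α * G θ) * ρ θ) • θ

lemma W2_nonneg {d : ℕ} (μ ν : Measure (EuclideanSpace ℝ (Fin d))) : 0 ≤ W2 μ ν := by
  apply Real.sInf_nonneg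
  rintro x ⟨π, -, -, rfl⟩
  exact Real.sqrt_nonneg _

set_option maxHeartbeats 1000000 in
/-- Stability of the consensus point. Under a growth condition on `G`,
second-moment and mass bounds on the densities, and the auxiliary estimate (with constants
`C̃(M)`) controlling set integrals over the quantile sets, the consensus points satisfy
`‖m[ρ] − m[ρ̃]‖ ≤ C (‖ρ − ρ̃‖_{L²(B_R(0))} + W₂(ρ, ρ̃))`, with `C` depending only on
`R, K, c, α` and `C̃`. -/
theorem consensus_point_stability {d : ℕ}
    (G : EuclideanSpace ℝ (Fin d) → ℝ) (hG : Continuous G)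
    (hGbdd : BddBelow (Set.range G)) (C₁ : ℝ) (hC₁ : 0 < C₁)
    (hgrowth : ∀ θ, G θ - sInf (Set.range G) ≤ C₁ * (1 + ‖θ‖ ^ 2))
    (R K c α : ℝ) (hR : 0 < R) (hK : 0 < K) (hc : 0 < c) (hα : 0 < α)
    (Ctil : ℝ → ℝ) :
    ∃ C : ℝ, 0 < C ∧
      ∀ (ρ ρt : EuclideanSpace ℝ (Fin d) → ℝ)
        (Q Qt : Set (EuclideanSpace ℝ (Fin d))),
        Measurable ρ → Measurable ρt →
        (∀ θ, 0 ≤ ρ θ) → (∀ θ, 0 ≤ ρt θ) →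
        (∫ θ, ρ θ) = 1 → (∫ θ, ρt θ) = 1 →
        MemLp ρ ⊤ volume → MemLp ρt ⊤ volume →
        (∫ θ, ‖θ‖ ^ 2 * ρ θ) ≤ K → (∫ θ, ‖θ‖ ^ 2 * ρt θ) ≤ K →
        MeasurableSet Q → MeasurableSet Qt →
        Q ⊆ closedBall (0 : EuclideanSpace ℝ (Fin d)) R →
        Qt ⊆ closedBall (0 : EuclideanSpace ℝ (Fin d)) R →
        c ≤ ∫ θ in Q, ρ θ → c ≤ ∫ θ in Qt, ρt θ →
        (∀ (M : ℝ) (f : EuclideanSpace ℝ (Fin d) → EuclideanSpace ℝ (Fin d)),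
          0 ≤ M → Measurable f →
          (∀ θ ∈ closedBall (0 : EuclideanSpace ℝ (Fin d)) R, ‖f θ‖ ≤ M) →
          ‖(∫ θ in Q, ρ θ • f θ) - ∫ θ in Qt, ρt θ • f θ‖
            ≤ Ctil M *
              (Real.sqrt (∫ θ in closedBall (0 : EuclideanSpace ℝ (Fin d)) R,
                  (ρ θ - ρt θ) ^ 2)
                + W2 (volume.withDensity fun θ => ENNReal.ofReal (ρ θ))
                    (volume.withDensity fun θ => ENNReal.ofReal (ρt θ)))) →
        ‖consensus G α ρ Q - consensus G α ρt Qt‖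
          ≤ C * (Real.sqrt (∫ θ in closedBall (0 : EuclideanSpace ℝ (Fin d)) R,
                  (ρ θ - ρt θ) ^ 2)
              + W2 (volume.withDensity fun θ => ENNReal.ofReal (ρ θ))
                  (volume.withDensity fun θ => ENNReal.ofReal (ρt θ))) := by
  have hG0 : ∀ θ, sInf (Set.range G) ≤ G θ := fun θ => csInf_le hGbdd (Set.mem_range_self θ)
  set G₀ := sInf (Set.range G) with hG₀def
  set gmax := Real.exp (-α * G₀) with hgmaxdef
  set gmin := Real.exp (-α * (G₀ + C₁ * (1 + R ^ 2))) with hgmindef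
  have hgmax : 0 < gmax := Real.exp_pos _
  have hgmin : 0 < gmin := Real.exp_pos _
  have hNlb0 : 0 < gmin * c := mul_pos hgmin hc
  -- pointwise bounds on the Gibbs weight
  have hub : ∀ θ, Real.exp (-α * G θ) ≤ gmax := by
    intro θ
    rw [hgmaxdef]
    apply Real.exp_le_exp.mpr
    nlinarith [hG0 θ]
  have hlb : ∀ θ ∈ closedBall (0 : EuclideanSpace ℝ (Fin d)) R,
      gmin ≤ Real.exp (-α * G θ) := by
    intro θ hθ
    rw [hgmindef]
    apply Real.exp_le_exp.mpr
    have hθR : ‖θ‖ ≤ R := by rwa [mem_closedBall_zero_iff] at hθ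
    have h2 : ‖θ‖ ^ 2 ≤ R ^ 2 := pow_le_pow_left₀ (norm_nonneg θ) hθR 2
    nlinarith [mul_le_mul_of_nonneg_left (hgrowth θ) hα.le,
      mul_le_mul_of_nonneg_left h2 (mul_nonneg hα.le hC₁.le)]
  refine ⟨(gmin * c)⁻¹ * |Ctil (gmax * R)| +
      ((gmin * c) ^ 2)⁻¹ * |Ctil gmax| * (gmax * R) + 1, by positivity, ?_⟩
  intro ρ ρt Q Qt hρm hρtm hρ0 hρt0 hρ1 hρt1 _ _ _ _ hQm hQtm hQR hQtR hQc hQtc haux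
  set D := Real.sqrt (∫ θ in closedBall (0 : EuclideanSpace ℝ (Fin d)) R,
      (ρ θ - ρt θ) ^ 2)
      + W2 (volume.withDensity fun θ => ENNReal.ofReal (ρ θ))
          (volume.withDensity fun θ => ENNReal.ofReal (ρt θ)) with hDdef
  have hD : 0 ≤ D := add_nonneg (Real.sqrt_nonneg _) (W2_nonneg _ _)
  rcases Nat.eq_zero_or_pos d with hd | hd
  · subst hd
    haveI : Subsingleton (EuclideanSpace ℝ (Fin 0)) := inferInstance
    rw [Subsingleton.elim (consensus G α ρ Q - consensus G α ρt Qt) 0, norm_zero]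
    exact mul_nonneg (by positivity) hD
  -- integrability
  have hρint : Integrable ρ := by
    by_contra h
    rw [integral_undef h] at hρ1
    exact one_ne_zero hρ1.symm
  have hρtint : Integrable ρt := by
    by_contra h
    rw [integral_undef h] at hρt1
    exact one_ne_zero hρt1.symm
  have hgcont : Continuous fun θ => Real.exp (-α * G θ) :=
    Real.continuous_exp.comp (continuous_const.mul hG)
  have hgρint : Integrable (fun θ => Real.exp (-α * G θ) * ρ θ) :=
    hρint.bdd_mul hgcont.aestronglyMeasurable
      (c := gmax) (ae_of_all _ fun θ => by
        rw [Real.norm_eq_abs, abs_of_pos (Real.exp_pos _)]; exact hub θ)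
  have hgρtint : Integrable (fun θ => Real.exp (-α * G θ) * ρt θ) :=
    hρtint.bdd_mul hgcont.aestronglyMeasurable
      (c := gmax) (ae_of_all _ fun θ => by
        rw [Real.norm_eq_abs, abs_of_pos (Real.exp_pos _)]; exact hub θ)
  set N := ∫ θ in Q, Real.exp (-α * G θ) * ρ θ with hNdef
  set Nt := ∫ θ in Qt, Real.exp (-α * G θ) * ρt θ with hNtdef
  set V := ∫ θ in Q, (Real.exp (-α * G θ) * ρ θ) • θ with hVdef
  set Vt := ∫ θ in Qt, (Real.exp (-α * G θ) * ρt θ) • θ with hVtdef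
  -- lower bounds on normalizations
  have hN : gmin * c ≤ N := by
    calc gmin * c ≤ gmin * ∫ θ in Q, ρ θ := by
          exact mul_le_mul_of_nonneg_left hQc hgmin.le
      _ = ∫ θ in Q, gmin * ρ θ := by rw [integral_const_mul]
      _ ≤ N := by
          apply setIntegral_mono_on ((hρint.const_mul gmin).integrableOn)
            hgρint.integrableOn hQm
          intro θ hθ
          exact mul_le_mul_of_nonneg_right (hlb θ (hQR hθ)) (hρ0 θ)
  have hNt : gmin * c ≤ Nt := by
    calc gmin * c ≤ gmin * ∫ θ in Qt, ρt θ := by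
          exact mul_le_mul_of_nonneg_left hQtc hgmin.le
      _ = ∫ θ in Qt, gmin * ρt θ := by rw [integral_const_mul]
      _ ≤ Nt := by
          apply setIntegral_mono_on ((hρtint.const_mul gmin).integrableOn)
            hgρtint.integrableOn hQtm
          intro θ hθ
          exact mul_le_mul_of_nonneg_right (hlb θ (hQtR hθ)) (hρt0 θ)
  have hN0 : (0:ℝ) < N := lt_of_lt_of_le hNlb0 hN
  have hNt0 : (0:ℝ) < Nt := lt_of_lt_of_le hNlb0 hNt
  -- bound on ‖Vt‖
  have hQtρt1 : ∫ θ in Qt, ρt θ ≤ 1 := by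
    rw [← hρt1]
    exact setIntegral_le_integral hρtint (ae_of_all _ hρt0)
  have hVtbd : ‖Vt‖ ≤ gmax * R := by
    calc ‖Vt‖ ≤ ∫ θ in Qt, gmax * R * ρt θ := by
          apply norm_integral_le_of_norm_le ((hρtint.const_mul (gmax * R)).integrableOn)
          filter_upwards [ae_restrict_mem hQtm] with θ hθ
          have hθR : ‖θ‖ ≤ R := by
            have := hQtR hθ; rwa [mem_closedBall_zero_iff] at this
          rw [norm_smul, Real.norm_eq_abs,
            abs_of_nonneg (mul_nonneg (Real.exp_pos _).le (hρt0 θ))]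
          nlinarith [hub θ, hρt0 θ, norm_nonneg θ, Real.exp_pos (-α * G θ),
            mul_le_mul_of_nonneg_left hθR (mul_nonneg (Real.exp_pos (-α * G θ)).le (hρt0 θ)),
            mul_le_mul_of_nonneg_right (hub θ) (mul_nonneg (hρt0 θ) hR.le)]
      _ = gmax * R * ∫ θ in Qt, ρt θ := by rw [integral_const_mul]
      _ ≤ gmax * R * 1 := by
          exact mul_le_mul_of_nonneg_left hQtρt1 (by positivity)
      _ = gmax * R := mul_one _
  -- auxiliary estimate, first application: difference of vector integrals
  have h1 : ‖V - Vt‖ ≤ |Ctil (gmax * R)| * D := by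
    have hfm : Measurable fun θ : EuclideanSpace ℝ (Fin d) => Real.exp (-α * G θ) • θ :=
      (hgcont.smul continuous_id).measurable
    have hfb : ∀ θ ∈ closedBall (0 : EuclideanSpace ℝ (Fin d)) R,
        ‖Real.exp (-α * G θ) • θ‖ ≤ gmax * R := by
      intro θ hθ
      rw [norm_smul, Real.norm_eq_abs, abs_of_pos (Real.exp_pos _)]
      have hθR : ‖θ‖ ≤ R := by rwa [mem_closedBall_zero_iff] at hθ
      exact mul_le_mul (hub θ) hθR (norm_nonneg θ) hgmax.le
    have := haux (gmax * R) (fun θ => Real.exp (-α * G θ) • θ) (by positivity) hfm hfb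
    have e1 : (∫ θ in Q, ρ θ • (Real.exp (-α * G θ) • θ)) = V := by
      rw [hVdef]
      apply integral_congr_ae
      filter_upwards with θ
      rw [smul_smul, mul_comm]
    have e2 : (∫ θ in Qt, ρt θ • (Real.exp (-α * G θ) • θ)) = Vt := by
      rw [hVtdef]
      apply integral_congr_ae
      filter_upwards with θ
      rw [smul_smul, mul_comm]
    rw [e1, e2] at this
    calc ‖V - Vt‖ ≤ Ctil (gmax * R) * D := this
      _ ≤ |Ctil (gmax * R)| * D := mul_le_mul_of_nonneg_right (le_abs_self _) hD
  -- auxiliary estimate, second application: difference of normalizations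
  have h2 : |N - Nt| ≤ |Ctil gmax| * D := by
    set e : EuclideanSpace ℝ (Fin d) := EuclideanSpace.single ⟨0, hd⟩ (1:ℝ) with hedef
    have he : ‖e‖ = 1 := by rw [hedef, EuclideanSpace.norm_single, norm_one]
    have hfm : Measurable fun θ : EuclideanSpace ℝ (Fin d) => Real.exp (-α * G θ) • e :=
      (hgcont.smul continuous_const).measurable
    have hfb : ∀ θ ∈ closedBall (0 : EuclideanSpace ℝ (Fin d)) R,
        ‖Real.exp (-α * G θ) • e‖ ≤ gmax := by
      intro θ hθ
      rw [norm_smul, Real.norm_eq_abs, abs_of_pos (Real.exp_pos _), he, mul_one]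
      exact hub θ
    have := haux gmax (fun θ => Real.exp (-α * G θ) • e) hgmax.le hfm hfb
    have e1 : (∫ θ in Q, ρ θ • (Real.exp (-α * G θ) • e)) = N • e := by
      rw [hNdef, ← integral_smul_const]
      apply integral_congr_ae
      filter_upwards with θ
      rw [smul_smul, mul_comm]
    have e2 : (∫ θ in Qt, ρt θ • (Real.exp (-α * G θ) • e)) = Nt • e := by
      rw [hNtdef, ← integral_smul_const]
      apply integral_congr_ae
      filter_upwards with θ
      rw [smul_smul, mul_comm]
    rw [e1, e2, ← sub_smul, norm_smul, he, mul_one, Real.norm_eq_abs] at this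
    calc |N - Nt| ≤ Ctil gmax * D := this
      _ ≤ |Ctil gmax| * D := mul_le_mul_of_nonneg_right (le_abs_self _) hD
  -- assemble
  have hmdef : consensus G α ρ Q - consensus G α ρt Qt
      = N⁻¹ • (V - Vt) + (N⁻¹ - Nt⁻¹) • Vt := by
    simp only [consensus, ← hNdef, ← hNtdef, ← hVdef, ← hVtdef]
    rw [smul_sub, sub_smul]
    abel
  rw [hmdef]
  have hinv : N⁻¹ ≤ (gmin * c)⁻¹ := by
    apply inv_anti₀ hNlb0 hN
  have hinvdiff : |N⁻¹ - Nt⁻¹| ≤ ((gmin * c) ^ 2)⁻¹ * (|Ctil gmax| * D) := by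
    rw [inv_sub_inv hN0.ne' hNt0.ne', abs_div, abs_of_pos (mul_pos hN0 hNt0),
      div_eq_mul_inv, abs_sub_comm]
    rw [mul_comm]
    apply mul_le_mul
    · apply inv_anti₀ (by positivity)
      calc (gmin * c) ^ 2 = (gmin * c) * (gmin * c) := sq (gmin * c) ▸ rfl
        _ ≤ N * Nt := mul_le_mul hN hNt hNlb0.le hN0.le
    · exact h2
    · exact abs_nonneg _
    · positivity
  calc ‖N⁻¹ • (V - Vt) + (N⁻¹ - Nt⁻¹) • Vt‖
      ≤ ‖N⁻¹ • (V - Vt)‖ + ‖(N⁻¹ - Nt⁻¹) • Vt‖ := norm_add_le _ _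
    _ = N⁻¹ * ‖V - Vt‖ + |N⁻¹ - Nt⁻¹| * ‖Vt‖ := by
        rw [norm_smul, norm_smul, Real.norm_eq_abs, Real.norm_eq_abs,
          abs_of_pos (inv_pos.mpr hN0)]
    _ ≤ (gmin * c)⁻¹ * (|Ctil (gmax * R)| * D)
        + (((gmin * c) ^ 2)⁻¹ * (|Ctil gmax| * D)) * (gmax * R) := by
        apply add_le_add
        · exact mul_le_mul hinv h1 (norm_nonneg _) (by positivity)
        · exact mul_le_mul hinvdiff hVtbd (norm_nonneg _) (by positivity)
    _ ≤ ((gmin * c)⁻¹ * |Ctil (gmax * R)| +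
          ((gmin * c) ^ 2)⁻¹ * |Ctil gmax| * (gmax * R) + 1) * D := by
        nlinarith [hD, abs_nonneg (Ctil (gmax * R)), abs_nonneg (Ctil gmax),
          inv_pos.mpr hNlb0, sq_nonneg (gmin * c), mul_pos hgmax hR]


end
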